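/- Let Ω be a Stokes domain of type (1) with Im 𝔖_a > 0 on Ω and Im 𝔖_a = 0 on ∂Ω. Then z = 𝔖_a(x) is a conformal bijection from Ω onto the upper half-plane ℂ₊ = {z : Im z > 0}; its inverse Ψ is obtained by solving Ψ'(z) = 1/√(Q(Ψ(z))) globally on ℂ₊. -/

import Mathlib

open Set Metric Filter Topology


/-- Local inverse package for `S` at a point `p ∈ Ω`. -/
lemma stokes_pkg {S sq : ℂ → ℂ} {Ω : Set ℂ} (hΩ : IsOpen Ω)
    (hsqne : ∀ x ∈ Ω, sq x ≠ 0) (hSd : ∀ x ∈ Ω, HasDerivAt S (sq x) x)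
    {p : ℂ} (hp : p ∈ Ω) :
    ∃ (U V : Set ℂ) (L : ℂ → ℂ), IsOpen U ∧ IsOpen V ∧ p ∈ U ∧ S p ∈ V ∧ U ⊆ Ω ∧
      Set.InjOn S U ∧ ContinuousOn L V ∧
      (∀ z ∈ V, L z ∈ U ∧ S (L z) = z) ∧
      (∀ x ∈ U, S x ∈ V ∧ L (S x) = x) ∧
      HasStrictDerivAt L (sq p)⁻¹ (S p) := by
  have hdiff : DifferentiableOn ℂ S Ω := fun x hx =>
    ((hSd x hx).differentiableAt).differentiableWithinAt
  have hstrict : HasStrictDerivAt S (sq p) p := by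
    have h1 : AnalyticAt ℂ S p := hdiff.analyticAt (hΩ.mem_nhds hp)
    have h3 := (h1.contDiffAt : ContDiffAt ℂ 1 S p).hasStrictDerivAt one_ne_zero
    rwa [(hSd p hp).deriv] at h3
  have hne : sq p ≠ 0 := hsqne p hp
  set hF := hstrict.hasStrictFDerivAt_equiv hne with hFdef
  set e := hF.toOpenPartialHomeomorph S with hedef
  have heS : (e : ℂ → ℂ) = S := hF.toOpenPartialHomeomorph_coe
  have hps : p ∈ e.source := hF.mem_toOpenPartialHomeomorph_source
  have hLinv : HasStrictDerivAt (hstrict.localInverse S (sq p) p hne) (sq p)⁻¹ (S p) :=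
    hstrict.to_localInverse hne
  have hLe : hstrict.localInverse S (sq p) p hne = e.symm := rfl
  set U₀ : Set ℂ := e.source ∩ Ω with hU₀
  have hU₀o : IsOpen U₀ := e.open_source.inter hΩ
  set V : Set ℂ := e.target ∩ e.symm ⁻¹' U₀ with hV
  have hVo : IsOpen V := e.isOpen_inter_preimage_symm hU₀o
  have hScont : ∀ x ∈ Ω, ContinuousAt S x := fun x hx => (hSd x hx).continuousAt
  -- final U
  set U : Set ℂ := U₀ ∩ S ⁻¹' V with hU
  have hUo : IsOpen U := by
    have hcont : ContinuousOn S U₀ := fun x hx => (hScont x hx.2).continuousWithinAt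
    exact hcont.isOpen_inter_preimage hU₀o hVo
  have hUsub : U ⊆ Ω := fun x hx => hx.1.2
  have hUsrc : U ⊆ e.source := fun x hx => hx.1.1
  have hinj : Set.InjOn S U := by
    have := e.injOn
    rw [heS] at this
    exact this.mono hUsrc
  have hVprop : ∀ z ∈ V, e.symm z ∈ U ∧ S (e.symm z) = z := by
    intro z hz
    have hzt : z ∈ e.target := hz.1
    have h1 : e.symm z ∈ U₀ := hz.2
    have h2 : S (e.symm z) = z := by
      have := e.right_inv hzt
      rwa [heS] at this
    refine ⟨⟨h1, ?_⟩, h2⟩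
    simp only [Set.mem_preimage, h2]
    exact hz
  have hUprop : ∀ x ∈ U, S x ∈ V ∧ e.symm (S x) = x := by
    intro x hx
    have h1 : S x ∈ V := hx.2
    refine ⟨h1, ?_⟩
    have := e.left_inv (hUsrc hx)
    rwa [heS] at this
  have hpU : p ∈ U := by
    refine ⟨⟨hps, hp⟩, ?_⟩
    simp only [Set.mem_preimage]
    have h1 : S p ∈ e.target := by
      have := e.map_source hps
      rwa [heS] at this
    refine ⟨h1, ?_⟩
    have := e.left_inv hps
    rw [heS] at this
    simp only [Set.mem_preimage, this]
    exact ⟨hps, hp⟩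
  have hSpV : S p ∈ V := (hUprop p hpU).1
  exact ⟨U, V, e.symm, hUo, hVo, hpU, hSpV, hUsub, hinj,
    e.continuousOn_symm.mono (fun z hz => hz.1), hVprop, hUprop, hLe ▸ hLinv⟩


/-- Uniqueness of lifts through the local homeomorphism `S`. -/
lemma stokes_lift_unique {S sq : ℂ → ℂ} {Ω : Set ℂ} (hΩ : IsOpen Ω)
    (hsqne : ∀ x ∈ Ω, sq x ≠ 0) (hSd : ∀ x ∈ Ω, HasDerivAt S (sq x) x)
    {γ : ℝ → ℂ} {a b : ℝ} (hab : a ≤ b) {y₁ y₂ : ℝ → ℂ}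
    (hc₁ : ContinuousOn y₁ (Icc a b)) (hc₂ : ContinuousOn y₂ (Icc a b))
    (hl₁ : ∀ t ∈ Icc a b, y₁ t ∈ Ω ∧ S (y₁ t) = γ t)
    (hl₂ : ∀ t ∈ Icc a b, y₂ t ∈ Ω ∧ S (y₂ t) = γ t)
    (h0 : y₁ a = y₂ a) : EqOn y₁ y₂ (Icc a b) := by
  set K : Set ℝ := Icc a b with hK
  have hKpc : IsPreconnected K := isPreconnected_Icc
  haveI : PreconnectedSpace K := Subtype.preconnectedSpace hKpc
  set A : Set K := {t : K | y₁ t = y₂ t} with hA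
  have hclosed : IsClosed A := by
    have h1 : Continuous fun t : K => y₁ t := hc₁.restrict
    have h2 : Continuous fun t : K => y₂ t := hc₂.restrict
    exact isClosed_eq h1 h2
  have hopen : IsOpen A := by
    rw [isOpen_iff_mem_nhds]
    rintro ⟨t, ht⟩ hta
    have hy1 : y₁ t ∈ Ω := (hl₁ t ht).1
    obtain ⟨U, V, L, hUo, hVo, hpU, hSpV, hUsub, hinj, hLc, hVp, hUp, hLd⟩ :=
      stokes_pkg hΩ hsqne hSd hy1
    have heq : y₂ t = y₁ t := (hta : y₁ t = y₂ t).symm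
    have h1 : ∀ᶠ s in 𝓝[K] t, y₁ s ∈ U := (hc₁ t ht).eventually_mem (hUo.mem_nhds hpU)
    have h2 : ∀ᶠ s in 𝓝[K] t, y₂ s ∈ U := by
      apply (hc₂ t ht).eventually_mem
      rw [heq] at *
      exact hUo.mem_nhds hpU
    have h3 : ∀ᶠ s in 𝓝[K] t, s ∈ K := eventually_mem_nhdsWithin
    have h4 : ∀ᶠ s in 𝓝[K] t, y₁ s = y₂ s := by
      filter_upwards [h1, h2, h3] with s hs1 hs2 hs3
      exact hinj hs1 hs2 ((hl₁ s hs3).2.trans (hl₂ s hs3).2.symm)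
    rw [nhds_subtype_eq_comap]
    rw [eventually_iff_exists_mem] at h4
    obtain ⟨W, hW, hWeq⟩ := h4
    rw [mem_nhdsWithin_iff_exists_mem_nhds_inter] at hW
    obtain ⟨W', hW', hWsub⟩ := hW
    rw [mem_comap]
    exact ⟨W', hW', fun ⟨s, hs⟩ hsW => hWeq s (hWsub ⟨hsW, hs⟩)⟩
  have h0K : a ∈ K := ⟨le_refl a, hab⟩
  have hne : A.Nonempty := ⟨⟨a, h0K⟩, h0⟩
  have : A = univ := IsClopen.eq_univ ⟨hclosed, hopen⟩ hne
  intro t ht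
  have : (⟨t, ht⟩ : K) ∈ A := this ▸ mem_univ _
  exact this

/-- norm of polynomial eval is eventually at least 1 -/
lemma poly_big {Q : Polynomial ℂ} (hdeg : 0 < Q.degree) :
    ∃ R : ℝ, ∀ x : ℂ, R ≤ ‖x‖ → 1 ≤ ‖Q.eval x‖ := by
  have hz : Filter.Tendsto (fun x : ℂ => ‖x‖) (Filter.comap norm Filter.atTop) Filter.atTop :=
    tendsto_comap
  have h := Q.tendsto_norm_atTop hdeg hz
  have h2 : ∀ᶠ x : ℂ in Filter.comap norm Filter.atTop, 1 ≤ ‖Q.eval x‖ :=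
    h.eventually (eventually_ge_atTop 1)
  rw [Filter.eventually_comap] at h2
  rw [Filter.eventually_atTop] at h2
  obtain ⟨R, hR⟩ := h2
  exact ⟨R, fun x hx => hR ‖x‖ hx x rfl⟩

/-- a lift of the segment `t ↦ z₀ + t c` has derivative `(sq (y s))⁻¹ * c`. -/
lemma stokes_lift_deriv {S sq : ℂ → ℂ} {Ω : Set ℂ} (hΩ : IsOpen Ω)
    (hsqne : ∀ x ∈ Ω, sq x ≠ 0) (hSd : ∀ x ∈ Ω, HasDerivAt S (sq x) x)
    {z₀ c : ℂ} {b : ℝ} {y : ℝ → ℂ}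
    (hyc : ContinuousOn y (Icc 0 b))
    (hy : ∀ t ∈ Icc (0:ℝ) b, y t ∈ Ω ∧ S (y t) = z₀ + (t:ℂ) * c)
    {s : ℝ} (hs : s ∈ Icc (0:ℝ) b) :
    HasDerivWithinAt y ((sq (y s))⁻¹ * c) (Icc 0 b) s := by
  obtain ⟨hyΩ, hyS⟩ := hy s hs
  obtain ⟨U, V, L, hUo, hVo, hpU, hSpV, hUsub, hinj, hLc, hVp, hUp, hLd⟩ :=
    stokes_pkg hΩ hsqne hSd hyΩ
  have hinner : HasDerivAt (fun z : ℂ => z₀ + z * c) c (s : ℂ) := by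
    simpa using ((hasDerivAt_id ((s : ℝ) : ℂ)).mul_const c).const_add z₀
  have hL : HasDerivAt L (sq (y s))⁻¹ (z₀ + (s:ℂ) * c) := by
    have := hLd.hasDerivAt
    rwa [hyS] at this
  have hGd : HasDerivAt (fun z : ℂ => L (z₀ + z * c)) ((sq (y s))⁻¹ * c) (s : ℂ) :=
    HasDerivAt.comp _ hL hinner
  have hGR : HasDerivAt (fun τ : ℝ => L (z₀ + (τ:ℂ) * c)) ((sq (y s))⁻¹ * c) s :=
    hGd.comp_ofReal
  have hyU : ∀ᶠ τ in 𝓝[Icc 0 b] s, y τ ∈ U := (hyc s hs).eventually_mem (hUo.mem_nhds hpU)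
  have heq : (fun τ : ℝ => y τ) =ᶠ[𝓝[Icc 0 b] s] fun τ : ℝ => L (z₀ + (τ:ℂ) * c) := by
    filter_upwards [hyU, self_mem_nhdsWithin] with τ h1 h2
    have h3 := (hy τ h2).2
    have h4 := (hUp _ h1).2
    rw [← h3, h4]
  have hsval : y s = L (z₀ + (s:ℂ) * c) := by
    rw [← hyS, (hUp _ hpU).2]
  exact (hGR.hasDerivWithinAt).congr_of_eventuallyEq heq hsval


/-- Existence of lifts of segments into the upper half plane. -/
lemma stokes_lift_exists {S sq : ℂ → ℂ} {Ω : Set ℂ} (hΩ : IsOpen Ω)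
    (hsqne : ∀ x ∈ Ω, sq x ≠ 0) (hSd : ∀ x ∈ Ω, HasDerivAt S (sq x) x)
    (hScont : ContinuousOn S (closure Ω))
    (hpos : ∀ x ∈ Ω, 0 < (S x).im)
    (hbd : ∀ x ∈ frontier Ω, (S x).im = 0)
    (hbig : ∃ R : ℝ, ∀ x ∈ Ω, R ≤ ‖x‖ → 1 ≤ ‖sq x‖)
    {x₀ : ℂ} (hx₀ : x₀ ∈ Ω) {w : ℂ} (hw : 0 < w.im) :
    ∃ y : ℝ → ℂ, Continuous y ∧ y 0 = x₀ ∧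
      ∀ t ∈ Icc (0:ℝ) 1, y t ∈ Ω ∧ S (y t) = S x₀ + (t:ℂ) * (w - S x₀) := by
  set z₀ : ℂ := S x₀ with hz₀
  set cc : ℂ := w - z₀ with hcc
  set γ : ℝ → ℂ := fun t => z₀ + (t:ℂ) * cc with hγ
  have hγcont : Continuous γ := by
    apply continuous_const.add
    exact (Complex.continuous_ofReal.mul continuous_const)
  have hmin : 0 < min z₀.im w.im := lt_min (hpos x₀ hx₀) hw
  have him : ∀ t ∈ Icc (0:ℝ) 1, min z₀.im w.im ≤ (γ t).im := by
    intro t ht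
    have h1 : (γ t).im = z₀.im + t * (w.im - z₀.im) := by
      simp only [hγ, Complex.add_im, Complex.mul_im, Complex.ofReal_re, Complex.ofReal_im,
        hcc, Complex.sub_im]
      ring
    rw [h1]
    rcases le_total z₀.im w.im with h | h
    · rw [min_eq_left h]; nlinarith [ht.1, ht.2]
    · rw [min_eq_right h]; nlinarith [ht.1, ht.2]
  set IsG : ℝ → Prop := fun t => t ∈ Icc (0:ℝ) 1 ∧ ∃ y : ℝ → ℂ, Continuous y ∧ y 0 = x₀ ∧
    ∀ s ∈ Icc (0:ℝ) t, y s ∈ Ω ∧ S (y s) = γ s with hIsG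
  have h0G : IsG 0 := by
    refine ⟨⟨le_refl 0, zero_le_one⟩, fun _ => x₀, continuous_const, rfl, ?_⟩
    intro s hs
    rw [Set.Icc_self, Set.mem_singleton_iff] at hs
    subst hs
    refine ⟨hx₀, ?_⟩
    simp [hγ, hz₀]
  have hdc : ∀ t t', IsG t → 0 ≤ t' → t' ≤ t → IsG t' := by
    rintro t t' ⟨ht1, y, hy1, hy2, hy3⟩ h0' h1'
    exact ⟨⟨h0', le_trans h1' ht1.2⟩, y, hy1, hy2, fun s hs => hy3 s ⟨hs.1, le_trans hs.2 h1'⟩⟩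
  have hbds : BddAbove (setOf IsG) := ⟨1, fun t ht => ht.1.2⟩
  have hGne : (setOf IsG).Nonempty := ⟨0, h0G⟩
  set T : ℝ := sSup (setOf IsG) with hT
  have hT0 : 0 ≤ T := le_csSup hbds h0G
  have hT1 : T ≤ 1 := csSup_le hGne (fun t ht => ht.1.2)
  have hlt : ∀ t, 0 ≤ t → t < T → IsG t := by
    intro t h0t htT
    obtain ⟨g, hg, hgt⟩ := exists_lt_of_lt_csSup hGne htT
    exact hdc g t hg h0t hgt.le
  -- main claim: IsG T
  have hTG : IsG T := by
    rcases eq_or_lt_of_le hT0 with heq | hTpos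
    · exact heq ▸ h0G
    have hYc : ∀ t, 0 ≤ t → t < T → ∃ y : ℝ → ℂ, Continuous y ∧ y 0 = x₀ ∧
        ∀ s ∈ Icc (0:ℝ) t, y s ∈ Ω ∧ S (y s) = γ s := fun t h h' => (hlt t h h').2
    choose Y hYcont hY0 hYprop using hYc
    set X : ℝ → ℂ := fun s => if h : 0 ≤ s ∧ s < T then Y s h.1 h.2 s else x₀ with hX
    have hagree : ∀ t (h₀ : 0 ≤ t) (h₁ : t < T), ∀ s ∈ Icc (0:ℝ) t, X s = Y t h₀ h₁ s := by
      intro t h₀ h₁ s hs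
      have hs0 : 0 ≤ s := hs.1
      have hsT : s < T := lt_of_le_of_lt hs.2 h₁
      have hXs : X s = Y s hs0 hsT s := by rw [hX]; simp [dif_pos (And.intro hs0 hsT)]
      rw [hXs]
      have := stokes_lift_unique hΩ hsqne hSd (a := 0) (b := s) hs0
        (hYcont s hs0 hsT).continuousOn (hYcont t h₀ h₁).continuousOn
        (fun τ hτ => hYprop s hs0 hsT τ hτ)
        (fun τ hτ => hYprop t h₀ h₁ τ ⟨hτ.1, le_trans hτ.2 hs.2⟩)
        ((hY0 s hs0 hsT).trans (hY0 t h₀ h₁).symm)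
      exact this ⟨hs0, le_refl s⟩
    have hXprop : ∀ s, 0 ≤ s → s < T → X s ∈ Ω ∧ S (X s) = γ s := by
      intro s h0 h1
      rw [hagree s h0 h1 s ⟨h0, le_refl s⟩]
      exact hYprop s h0 h1 s ⟨h0, le_refl s⟩
    have hX0 : X 0 = x₀ := by
      rw [hagree 0 (le_refl 0) hTpos 0 ⟨le_refl 0, le_refl 0⟩]
      exact hY0 0 (le_refl 0) hTpos
    have hXcont : ∀ t, 0 ≤ t → t < T → ContinuousOn X (Icc 0 t) := by
      intro t h0 h1
      exact ((hYcont t h0 h1).continuousOn).congr (fun s hs => hagree t h0 h1 s hs)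
    -- Step A : a bound C along a sequence approaching T
    obtain ⟨R, hR⟩ := hbig
    set K : ℝ := ‖cc‖ with hKdef
    have hbnd : ∃ C, ∀ t₀, 0 ≤ t₀ → t₀ < T → ∃ t, t₀ ≤ t ∧ 0 ≤ t ∧ t < T ∧ ‖X t‖ ≤ C := by
      by_cases hcase : ∀ t₁, 0 ≤ t₁ → t₁ < T → ∃ t, t₁ ≤ t ∧ t < T ∧ ‖X t‖ ≤ R
      · refine ⟨R, fun t₀ h0 h1 => ?_⟩
        obtain ⟨t, ht1, ht2, ht3⟩ := hcase t₀ h0 h1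
        exact ⟨t, ht1, le_trans h0 ht1, ht2, ht3⟩
      · push_neg at hcase
        obtain ⟨t₁, h₁0, h₁T, ht₁⟩ := hcase
        refine ⟨‖X t₁‖ + K * T, fun t₀ h0 h1 => ?_⟩
        set t : ℝ := max t₀ t₁ with htdef
        have htT : t < T := max_lt h1 h₁T
        have ht0 : 0 ≤ t := le_trans h0 (le_max_left _ _)
        have ht₁t : t₁ ≤ t := le_max_right _ _
        refine ⟨t, le_max_left _ _, ht0, htT, ?_⟩
        have hIsub : Icc t₁ t ⊆ Icc (0:ℝ) t := fun s hs => ⟨le_trans h₁0 hs.1, hs.2⟩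
        have key : ∀ s ∈ Icc t₁ t, HasDerivWithinAt X ((sq (X s))⁻¹ * cc) (Icc t₁ t) s := by
          intro s hs
          have := stokes_lift_deriv hΩ hsqne hSd (z₀ := z₀) (c := cc) (b := t)
            (hXcont t ht0 htT) (fun τ hτ => hXprop τ hτ.1 (lt_of_le_of_lt hτ.2 htT))
            (hIsub hs)
          exact this.mono hIsub
        have hbound : ∀ s ∈ Icc t₁ t, ‖(sq (X s))⁻¹ * cc‖ ≤ K := by
          intro s hs
          have hsT : s < T := lt_of_le_of_lt hs.2 htT
          have hs0 : 0 ≤ s := le_trans h₁0 hs.1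
          have hXΩ : X s ∈ Ω := (hXprop s hs0 hsT).1
          have hRs : R < ‖X s‖ := ht₁ s hs.1 hsT
          have h1 : 1 ≤ ‖sq (X s)‖ := hR _ hXΩ hRs.le
          rw [norm_mul, norm_inv]
          calc ‖sq (X s)‖⁻¹ * ‖cc‖ ≤ 1 * ‖cc‖ := by
                apply mul_le_mul_of_nonneg_right _ (norm_nonneg _)
                exact inv_le_one_of_one_le₀ h1
            _ = K := by rw [one_mul]
        have hmvt := Convex.norm_image_sub_le_of_norm_hasDerivWithin_le
          key hbound (convex_Icc t₁ t) (left_mem_Icc.mpr ht₁t) (right_mem_Icc.mpr ht₁t)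
        have : ‖X t - X t₁‖ ≤ K * T := by
          refine le_trans hmvt ?_
          have hKnn : 0 ≤ K := norm_nonneg _
          have : ‖t - t₁‖ ≤ T := by
            rw [Real.norm_eq_abs, abs_of_nonneg (by linarith)]
            linarith
          nlinarith
        calc ‖X t‖ ≤ ‖X t₁‖ + ‖X t - X t₁‖ := by
              have := norm_add_le (X t₁) (X t - X t₁); simpa using this
          _ ≤ ‖X t₁‖ + K * T := by linarith
    obtain ⟨C, hC⟩ := hbnd
    -- Step B : extract a convergent sequence with limit p ∈ Ω
    have haux : ∀ n : ℕ, ∃ t, (T - T/(n+2)) ≤ t ∧ 0 ≤ t ∧ t < T ∧ ‖X t‖ ≤ C := by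
      intro n
      have hpos2 : (0:ℝ) < T/(n+2) := by positivity
      have h1 : T - T/(n+2) < T := by linarith
      have h2 : 0 ≤ T - T/(n+2) := by
        have : T/(n+2) ≤ T := by
          rw [div_le_iff₀ (by positivity)]
          nlinarith
        linarith
      exact hC _ h2 h1
    choose u hu1 hu2 hu3 hu4 using haux
    have htendu : Tendsto u atTop (𝓝 T) := by
      have hlow : Tendsto (fun n : ℕ => T - T/(n+2)) atTop (𝓝 T) := by
        have h2 : Tendsto (fun n : ℕ => T/((n:ℝ)+2)) atTop (𝓝 0) := by
          apply Tendsto.div_atTop tendsto_const_nhds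
          exact tendsto_atTop_add_const_right _ 2 tendsto_natCast_atTop_atTop
        have := tendsto_const_nhds (x := T) (f := atTop (α := ℕ)) |>.sub h2
        simpa using this
      exact tendsto_of_tendsto_of_tendsto_of_le_of_le hlow tendsto_const_nhds
        (fun n => hu1 n) (fun n => (hu3 n).le)
    have hmem : ∀ n, X (u n) ∈ closedBall (0:ℂ) C := by
      intro n
      rw [mem_closedBall_zero_iff]
      exact hu4 n
    obtain ⟨p, hpmem, φ, hφmono, hφtend⟩ :=
      (isCompact_closedBall (0:ℂ) C).tendsto_subseq hmem
    have huφ : Tendsto (fun n => u (φ n)) atTop (𝓝 T) := htendu.comp hφmono.tendsto_atTop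
    have hXΩ : ∀ n, X (u (φ n)) ∈ Ω := fun n => (hXprop _ (hu2 _) (hu3 _)).1
    have hpcl : p ∈ closure Ω := by
      apply mem_closure_of_tendsto hφtend
      filter_upwards with n
      exact hXΩ n
    have hSp : S p = γ T := by
      have h1 : Tendsto (fun n => S (X (u (φ n)))) atTop (𝓝 (S p)) := by
        apply (hScont p hpcl).tendsto.comp
        apply tendsto_nhdsWithin_of_tendsto_nhds_of_eventually_within _ hφtend
        filter_upwards with n
        exact subset_closure (hXΩ n)
      have h2 : Tendsto (fun n => γ (u (φ n))) atTop (𝓝 (γ T)) :=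
        (hγcont.tendsto T).comp huφ
      have h3 : (fun n => S (X (u (φ n)))) = fun n => γ (u (φ n)) :=
        funext fun n => (hXprop _ (hu2 _) (hu3 _)).2
      rw [h3] at h1
      exact tendsto_nhds_unique h1 h2
    have hpΩ : p ∈ Ω := by
      by_contra hcon
      have hfr : p ∈ frontier Ω := by
        rw [frontier, hΩ.interior_eq]
        exact ⟨hpcl, hcon⟩
      have := hbd p hfr
      rw [hSp] at this
      have := him T ⟨hT0, hT1⟩
      linarith
    -- Step C : gluing at T
    obtain ⟨U, V, L, hUo, hVo, hpU, hSpV, hUsub, hinj, hLc, hVp, hUp, hLd⟩ :=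
      stokes_pkg hΩ hsqne hSd hpΩ
    obtain ⟨r, hr0, hrU⟩ := Metric.isOpen_iff.1 hUo p hpU
    set V' : Set ℂ := V ∩ L ⁻¹' (ball p (r/2)) with hV'
    have hV'o : IsOpen V' := hLc.isOpen_inter_preimage hVo isOpen_ball
    have hSpV' : S p ∈ V' := by
      refine ⟨hSpV, ?_⟩
      rw [Set.mem_preimage, (hUp p hpU).2]
      exact mem_ball_self (by linarith)
    have hγT : γ T ∈ V' := by rwa [← hSp]
    have hev : ∀ᶠ τ in 𝓝 T, γ τ ∈ V' :=
      (hγcont.continuousAt).eventually_mem (hV'o.mem_nhds hγT)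
    obtain ⟨η, hη0, hηsub⟩ := Metric.eventually_nhds_iff_ball.mp hev
    have hevn : ∀ᶠ n in atTop, |u (φ n) - T| < η ∧ ‖X (u (φ n)) - p‖ < r/2 := by
      have e1 : ∀ᶠ n in atTop, |u (φ n) - T| < η := by
        have := Metric.tendsto_nhds.mp huφ η hη0
        simpa [Real.dist_eq] using this
      have e2 : ∀ᶠ n in atTop, ‖X (u (φ n)) - p‖ < r/2 := by
        have := Metric.tendsto_nhds.mp hφtend (r/2) (by linarith)
        simpa [dist_eq_norm] using this
      exact e1.and e2
    obtain ⟨n₀, hn₀⟩ := hevn.exists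
    set t' : ℝ := u (φ n₀) with ht'def
    have ht'T : t' < T := hu3 _
    have ht'0 : 0 ≤ t' := hu2 _
    have hdistt' : |t' - T| < η := hn₀.1
    have hXt' : X t' ∈ ball p (r/2) := by
      rw [mem_ball, dist_eq_norm]
      exact hn₀.2
    have hall : ∀ τ, t' ≤ τ → τ ≤ T → γ τ ∈ V' := by
      intro τ h1 h2
      apply hηsub
      rw [mem_ball, Real.dist_eq]
      rw [abs_sub_lt_iff] at hdistt' ⊢
      constructor <;> [linarith [hdistt'.1]; linarith [hdistt'.2]]
    -- agreement of X with L ∘ γ on [t', T)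
    have hAgr : ∀ τ, t' ≤ τ → τ < T → X τ = L (γ τ) := by
      intro τ hτ1 hτ2
      -- use uniqueness of lifts on [t', τ]
      have hLγlift : ∀ s ∈ Icc t' τ, L (γ s) ∈ Ω ∧ S (L (γ s)) = γ s := by
        intro s hs
        have hsV' : γ s ∈ V' := hall s hs.1 (le_trans hs.2 hτ2.le)
        exact ⟨hUsub (hVp _ hsV'.1).1, (hVp _ hsV'.1).2⟩
      have hXlift : ∀ s ∈ Icc t' τ, X s ∈ Ω ∧ S (X s) = γ s := by
        intro s hs
        exact hXprop s (le_trans ht'0 hs.1) (lt_of_le_of_lt hs.2 hτ2)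
      have hcX : ContinuousOn X (Icc t' τ) := by
        apply (hXcont τ (le_trans ht'0 hτ1) hτ2).mono
        exact fun s hs => ⟨le_trans ht'0 hs.1, hs.2⟩
      have hcL : ContinuousOn (fun s => L (γ s)) (Icc t' τ) := by
        apply (hLc.mono (fun z hz => (hz : z ∈ V').1)).comp hγcont.continuousOn
        exact fun s hs => hall s hs.1 (le_trans hs.2 hτ2.le)
      have hstart : X t' = L (γ t') := by
        have h1 : X t' ∈ U := hrU (ball_subset_ball (by linarith) hXt')
        have h2 : γ t' ∈ V' := hall t' (le_refl _) (le_trans hτ1 hτ2.le)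
        have h3 : L (γ t') ∈ U := (hVp _ h2.1).1
        have h4 : S (X t') = γ t' := (hXprop t' ht'0 ht'T).2
        have h5 : S (L (γ t')) = γ t' := (hVp _ h2.1).2
        exact hinj h1 h3 (h4.trans h5.symm)
      have := stokes_lift_unique hΩ hsqne hSd (a := t') (b := τ) hτ1
        hcX hcL hXlift hLγlift hstart
      exact this (show τ ∈ Icc t' τ from ⟨hτ1, le_refl τ⟩)
    -- glue a lift on [0, T]
    set Yt : ℝ → ℂ := Y t' ht'0 ht'T with hYt
    set yhat : ℝ → ℂ :=
      fun s => if s ≤ t' then Yt (max 0 (min s t')) else L (γ (max t' (min s T))) with hyhat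
    have hf1 : Continuous fun s : ℝ => Yt (max 0 (min s t')) :=
      (hYcont t' ht'0 ht'T).comp (continuous_const.max (continuous_id.min continuous_const))
    have hg1 : Continuous fun s : ℝ => L (γ (max t' (min s T))) := by
      have hmaps : ∀ s : ℝ, γ (max t' (min s T)) ∈ V := by
        intro s
        have h1 : t' ≤ max t' (min s T) := le_max_left _ _
        have h2 : max t' (min s T) ≤ T := max_le ht'T.le (min_le_right _ _)
        exact (hall _ h1 h2).1
      have := (hLc.mono (Set.Subset.refl V)).comp_continuous
        (hγcont.comp (continuous_const.max (continuous_id.min continuous_const))) hmaps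
      exact this
    have hbdry : ∀ s : ℝ, s = t' → Yt (max 0 (min s t')) = L (γ (max t' (min s T))) := by
      intro s hs
      subst hs
      rw [min_self, max_eq_right ht'0, min_eq_left ht'T.le, max_self]
      have h1 : X t' = Yt t' := hagree t' ht'0 ht'T t' ⟨ht'0, le_refl t'⟩
      rw [← h1]
      exact hAgr t' (le_refl t') ht'T
    have hglue : Continuous yhat := by
      rw [hyhat]
      exact Continuous.if_le hf1 hg1 continuous_id continuous_const hbdry
    have hyhat0 : yhat 0 = x₀ := by
      rw [hyhat]
      simp only [if_pos ht'0, min_eq_left ht'0, max_self]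
      have h1 : X 0 = Yt 0 := hagree t' ht'0 ht'T 0 ⟨le_refl 0, ht'0⟩
      rw [← h1, hX0]
    have hyhatp : ∀ s ∈ Icc (0:ℝ) T, yhat s ∈ Ω ∧ S (yhat s) = γ s := by
      intro s hs
      rw [hyhat]
      by_cases hst : s ≤ t'
      · simp only [if_pos hst, min_eq_left hst, max_eq_right hs.1]
        exact hYprop t' ht'0 ht'T s ⟨hs.1, hst⟩
      · push_neg at hst
        simp only [if_neg (not_le.mpr hst), min_eq_left hs.2, max_eq_right hst.le]
        have h2 : γ s ∈ V' := hall s hst.le hs.2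
        exact ⟨hUsub (hVp _ h2.1).1, (hVp _ h2.1).2⟩
    exact ⟨⟨hT0, hT1⟩, yhat, hglue, hyhat0, hyhatp⟩
  -- Now : T must equal 1, else we can extend past T
  rcases eq_or_lt_of_le hT1 with hTeq | hTlt1
  · obtain ⟨_, y, hy1, hy2, hy3⟩ := hTG
    rw [hTeq] at hy3
    exact ⟨y, hy1, hy2, hy3⟩
  · exfalso
    obtain ⟨_, yT, hyTc, hyT0, hyTp⟩ := hTG
    obtain ⟨hp'Ω, hp'S⟩ := hyTp T ⟨hT0, le_refl T⟩
    obtain ⟨U₂, V₂, L₂, hU₂o, hV₂o, hpU₂, hSpV₂, hU₂sub, hinj₂, hL₂c, hV₂p, hU₂p, hL₂d⟩ :=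
      stokes_pkg hΩ hsqne hSd hp'Ω
    have hγTV₂ : γ T ∈ V₂ := by rw [← hp'S]; exact hSpV₂
    have hev₂ : ∀ᶠ τ in 𝓝 T, γ τ ∈ V₂ :=
      (hγcont.continuousAt).eventually_mem (hV₂o.mem_nhds hγTV₂)
    obtain ⟨η₂, hη₂0, hη₂sub⟩ := Metric.eventually_nhds_iff_ball.mp hev₂
    set t₂ : ℝ := min (T + η₂/2) 1 with ht₂def
    have hTt₂ : T < t₂ := lt_min (by linarith) hTlt1
    have ht₂1 : t₂ ≤ 1 := min_le_right _ _
    have hclamp : ∀ s, T ≤ s → s ≤ t₂ → γ s ∈ V₂ := by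
      intro s h1 h2
      apply hη₂sub
      rw [mem_ball, Real.dist_eq, abs_of_nonneg (by linarith)]
      have : t₂ ≤ T + η₂/2 := min_le_left _ _
      linarith
    set y₂ : ℝ → ℂ := fun s => if s ≤ T then yT (min s T) else L₂ (γ (max T (min s t₂))) with hy₂
    have hf2 : Continuous fun s : ℝ => yT (min s T) :=
      hyTc.comp (continuous_id.min continuous_const)
    have hg2 : Continuous fun s : ℝ => L₂ (γ (max T (min s t₂))) := by
      have hmaps : ∀ s : ℝ, γ (max T (min s t₂)) ∈ V₂ := by
        intro s
        exact hclamp _ (le_max_left _ _) (max_le hTt₂.le (min_le_right _ _))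
      exact (hL₂c.mono (Set.Subset.refl V₂)).comp_continuous
        (hγcont.comp (continuous_const.max (continuous_id.min continuous_const))) hmaps
    have hbdry₂ : ∀ s : ℝ, s = T → yT (min s T) = L₂ (γ (max T (min s t₂))) := by
      intro s hs
      subst hs
      rw [min_self, min_eq_left hTt₂.le, max_self, ← hp'S, (hU₂p _ hpU₂).2]
    have hglue₂ : Continuous y₂ := by
      rw [hy₂]
      exact Continuous.if_le hf2 hg2 continuous_id continuous_const hbdry₂
    have hy₂0 : y₂ 0 = x₀ := by
      rw [hy₂]
      simp only [if_pos hT0, min_eq_left hT0]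
      exact hyT0
    have hy₂p : ∀ s ∈ Icc (0:ℝ) t₂, y₂ s ∈ Ω ∧ S (y₂ s) = γ s := by
      intro s hs
      rw [hy₂]
      by_cases hst : s ≤ T
      · simp only [if_pos hst, min_eq_left hst]
        exact hyTp s ⟨hs.1, hst⟩
      · push_neg at hst
        simp only [if_neg (not_le.mpr hst), min_eq_left hs.2, max_eq_right hst.le]
        have h2 : γ s ∈ V₂ := hclamp s hst.le hs.2
        exact ⟨hU₂sub (hV₂p _ h2).1, (hV₂p _ h2).2⟩
    have hIsGt₂ : IsG t₂ := ⟨⟨le_trans hT0 hTt₂.le, ht₂1⟩, y₂, hglue₂, hy₂0, hy₂p⟩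
    have := le_csSup hbds hIsGt₂
    linarith


/-- Stability: all lifts for nearby endpoints `w'` end at `Lf w'` for a continuous `Lf`. -/
lemma stokes_endpoint_stable {S sq : ℂ → ℂ} {Ω : Set ℂ} (hΩ : IsOpen Ω)
    (hsqne : ∀ x ∈ Ω, sq x ≠ 0) (hSd : ∀ x ∈ Ω, HasDerivAt S (sq x) x)
    {x₀ : ℂ} (hx₀ : x₀ ∈ Ω) {w : ℂ}
    {yw : ℝ → ℂ} (hywc : Continuous yw) (hyw0 : yw 0 = x₀)
    (hywl : ∀ t ∈ Icc (0:ℝ) 1, yw t ∈ Ω ∧ S (yw t) = S x₀ + (t:ℂ) * (w - S x₀)) :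
    ∃ (Lf : ℂ → ℂ) (V : Set ℂ), IsOpen V ∧ w ∈ V ∧ ContinuousOn Lf V ∧
      ∀ w' ∈ V, ∀ y' : ℝ → ℂ, Continuous y' → y' 0 = x₀ →
        (∀ t ∈ Icc (0:ℝ) 1, y' t ∈ Ω ∧ S (y' t) = S x₀ + (t:ℂ) * (w' - S x₀)) →
        y' 1 = Lf w' := by
  set z₀ : ℂ := S x₀ with hz₀
  set γw : ℝ → ℂ := fun s => z₀ + (s:ℂ) * (w - z₀) with hγw
  have hγwc : Continuous γw :=
    continuous_const.add (Complex.continuous_ofReal.mul continuous_const)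
  -- local packages along the lift
  choose Up Vp Lp hUo hVo hpU hSpV hUsub hinj hLc hVp hUp hLd using
    fun t : Icc (0:ℝ) 1 => stokes_pkg hΩ hsqne hSd (hywl t.1 t.2).1
  -- the open cover of [0,1]
  set W : Icc (0:ℝ) 1 → Set ℝ := fun c => yw ⁻¹' (Up c) ∩ γw ⁻¹' (Vp c) with hW
  have hWo : ∀ c, IsOpen (W c) := fun c =>
    ((hUo c).preimage hywc).inter ((hVo c).preimage hγwc)
  have hWcover : Icc (0:ℝ) 1 ⊆ ⋃ c, W c := by
    intro s hs
    refine mem_iUnion.mpr ⟨⟨s, hs⟩, hpU ⟨s, hs⟩, ?_⟩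
    have h1 : γw s = S (yw s) := (hywl s hs).2.symm
    rw [Set.mem_preimage, h1]
    exact hSpV ⟨s, hs⟩
  -- Lebesgue number
  obtain ⟨ε, hε0, hεleb⟩ : ∃ ε > 0, ∀ s ∈ Icc (0:ℝ) 1, ∃ c, Metric.ball s ε ⊆ W c := by
    obtain ⟨ε, ⟨hε0, h⟩⟩ :=
      Metric.uniformity_basis_dist.lebesgue_number_lemma isCompact_Icc hWo hWcover
    refine ⟨ε, hε0, fun s hs => ?_⟩
    obtain ⟨c, hc⟩ := h s hs
    refine ⟨c, fun x hx => hc ?_⟩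
    rw [Metric.mem_ball, dist_comm] at hx
    exact hx
  obtain ⟨N, hN⟩ := exists_nat_gt (1/ε)
  have hNR : (0:ℝ) < N := lt_trans (by positivity) hN
  have hN1 : 1 ≤ N := by exact_mod_cast Nat.one_le_iff_ne_zero.mpr (by
    rintro rfl; simp at hNR)
  have hstep : (1:ℝ)/N < ε := by
    rw [div_lt_iff₀ hNR]
    have := (div_lt_iff₀ hε0).mp hN
    linarith [mul_comm ε (N:ℝ)]
  -- blocks
  have hblkEx : ∀ i : ℕ, i < N → ∃ c : Icc (0:ℝ) 1,
      ∀ s : ℝ, (i:ℝ)/N ≤ s → s ≤ ((i:ℝ)+1)/N → yw s ∈ Up c ∧ γw s ∈ Vp c := by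
    intro i hi
    have hmem : (i:ℝ)/N ∈ Icc (0:ℝ) 1 := by
      constructor
      · positivity
      · rw [div_le_one hNR]; exact_mod_cast hi.le
    obtain ⟨c, hc⟩ := hεleb _ hmem
    refine ⟨c, fun s h1 h2 => ?_⟩
    have hball : s ∈ Metric.ball ((i:ℝ)/N) ε := by
      rw [Metric.mem_ball, Real.dist_eq, abs_of_nonneg (by linarith)]
      have : s - (i:ℝ)/N ≤ 1/N := by
        have : ((i:ℝ)+1)/N = (i:ℝ)/N + 1/N := by ring
        linarith [h2.trans_eq this]
      linarith
    exact hc hball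
  choose cblk hblk using hblkEx
  -- eventual condition E : nearby segments stay in the V-sets
  have hE : ∀ i (hi : i < N), ∀ᶠ w' in 𝓝 w, ∀ s : ℝ, (i:ℝ)/N ≤ s → s ≤ ((i:ℝ)+1)/N →
      (z₀ + (s:ℂ) * (w' - z₀)) ∈ Vp (cblk i hi) := by
    intro i hi
    set Kc : Set ℂ := γw '' (Icc ((i:ℝ)/N) (((i:ℝ)+1)/N)) with hKc
    have hKcpt : IsCompact Kc := (isCompact_Icc).image hγwc
    have hKsub : Kc ⊆ Vp (cblk i hi) := by
      rintro _ ⟨s, hs, rfl⟩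
      exact (hblk i hi s hs.1 hs.2).2
    obtain ⟨d, hd0, hdsub⟩ :=
      hKcpt.exists_thickening_subset_open (hVo (cblk i hi)) hKsub
    have hball : ∀ᶠ w' in 𝓝 w, w' ∈ Metric.ball w d :=
      Metric.ball_mem_nhds w hd0
    filter_upwards [hball] with w' hw' s hs1 hs2
    apply hdsub
    rw [Metric.mem_thickening_iff]
    refine ⟨γw s, ⟨s, ⟨hs1, hs2⟩, rfl⟩, ?_⟩
    have hs0 : 0 ≤ s := le_trans (by positivity) hs1
    have hs1' : s ≤ 1 := by
      have h2 : ((i:ℝ)+1)/N ≤ 1 := by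
        rw [div_le_one hNR]
        exact_mod_cast Nat.succ_le_of_lt hi
      linarith
    have : (z₀ + (s:ℂ) * (w' - z₀)) - γw s = (s:ℂ) * (w' - w) := by
      rw [hγw]; ring
    rw [dist_eq_norm, this, norm_mul, Complex.norm_real, Real.norm_eq_abs,
      abs_of_nonneg hs0]
    have hw'd : ‖w' - w‖ < d := by rwa [Metric.mem_ball, dist_eq_norm] at hw'
    calc s * ‖w' - w‖ ≤ 1 * ‖w' - w‖ :=
          mul_le_mul_of_nonneg_right hs1' (norm_nonneg _)
      _ = ‖w' - w‖ := one_mul _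
      _ < d := hw'd
  -- eventual condition M : matching at the knots
  have hM : ∀ k (hk : k + 1 < N), ∀ᶠ w' in 𝓝 w,
      Lp (cblk k (by omega)) (z₀ + ((((k:ℝ)+1)/N : ℝ):ℂ) * (w' - z₀)) ∈
        Up (cblk (k+1) hk) := by
    intro k hk
    have hkN : k < N := by omega
    have hknot1 : (k:ℝ)/N ≤ ((k:ℝ)+1)/N := by
      have h1 : ((k:ℝ)+1)/N - (k:ℝ)/N = 1/N := by ring
      have h2 : (0:ℝ) < 1/N := by positivity
      linarith
    -- the knot value for the base path
    have hknotV : γw (((k:ℝ)+1)/N) ∈ Vp (cblk k hkN) :=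
      (hblk k hkN _ hknot1 (le_refl _)).2
    have hywknot : yw (((k:ℝ)+1)/N) ∈ Up (cblk k hkN) :=
      (hblk k hkN _ hknot1 (le_refl _)).1
    have hknot2 : ((k:ℝ)+1)/N ≤ (((k:ℝ)+1)+1)/N := by
      have h1 : (((k:ℝ)+1)+1)/N - ((k:ℝ)+1)/N = 1/N := by ring
      have h2 : (0:ℝ) < 1/N := by positivity
      linarith
    have hywknot2 : yw (((k:ℝ)+1)/N) ∈ Up (cblk (k+1) hk) := by
      have := (hblk (k+1) hk (((k:ℝ)+1)/N) (by push_cast; linarith) (by push_cast; linarith)).1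
      exact this
    -- continuity of the knot-value map in w'
    have hcw : ContinuousAt (fun w' : ℂ => Lp (cblk k hkN)
        (z₀ + ((((k:ℝ)+1)/N : ℝ):ℂ) * (w' - z₀))) w := by
      apply ContinuousAt.comp
      · apply (hLc (cblk k hkN)).continuousAt
        apply (hVo (cblk k hkN)).mem_nhds
        exact hknotV
      · exact (continuous_const.add (continuous_const.mul
          (continuous_id.sub continuous_const))).continuousAt
    have hval : Lp (cblk k hkN) (z₀ + ((((k:ℝ)+1)/N : ℝ):ℂ) * (w - z₀)) =
        yw (((k:ℝ)+1)/N) := by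
      have h1 : (z₀ + ((((k:ℝ)+1)/N : ℝ):ℂ) * (w - z₀)) = γw (((k:ℝ)+1)/N) := rfl
      rw [h1]
      have h2 : γw (((k:ℝ)+1)/N) = S (yw (((k:ℝ)+1)/N)) :=
        ((hywl _ ⟨by positivity, by
          rw [div_le_one hNR]; push_cast; exact_mod_cast (by exact_mod_cast hk.le : ((k:ℕ)+1 : ℕ) ≤ N)⟩).2).symm
      rw [h2]
      exact (hUp (cblk k hkN) _ hywknot).2
    have : ∀ᶠ w' in 𝓝 w, Lp (cblk k hkN)
        (z₀ + ((((k:ℝ)+1)/N : ℝ):ℂ) * (w' - z₀)) ∈ Up (cblk (k+1) hk) := by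
      apply hcw.eventually_mem
      rw [hval]
      exact (hUo (cblk (k+1) hk)).mem_nhds hywknot2
    exact this
  -- combine the finitely many eventual conditions
  have hEall : ∀ᶠ w' in 𝓝 w, ∀ i ∈ Finset.range N, ∀ (hi : i < N),
      ∀ s : ℝ, (i:ℝ)/N ≤ s → s ≤ ((i:ℝ)+1)/N →
      (z₀ + (s:ℂ) * (w' - z₀)) ∈ Vp (cblk i hi) := by
    rw [Filter.eventually_all_finset]
    intro i hi
    filter_upwards [hE i (Finset.mem_range.mp hi)] with w' h hi'
    exact h
  have hMall : ∀ᶠ w' in 𝓝 w, ∀ k ∈ Finset.range N, ∀ (hk : k + 1 < N),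
      Lp (cblk k (by omega)) (z₀ + ((((k:ℝ)+1)/N : ℝ):ℂ) * (w' - z₀)) ∈
        Up (cblk (k+1) hk) := by
    rw [Filter.eventually_all_finset]
    intro k _
    by_cases hk1 : k + 1 < N
    · filter_upwards [hM k hk1] with w' h hk
      exact h
    · filter_upwards with w' hk
      exact absurd hk hk1
  obtain ⟨O, hOmem, hOopen, hwO⟩ := _root_.eventually_nhds_iff.mp (hEall.and hMall)
  have hlast : N - 1 < N := by omega
  have hcastA : (((N-1 : ℕ):ℝ)+1)/N = 1 := by
    rw [Nat.cast_sub hN1]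
    push_cast
    field_simp
    ring
  have hwVlast : w ∈ Vp (cblk (N-1) hlast) := by
    have h1 : γw 1 ∈ Vp (cblk (N-1) hlast) := by
      apply (hblk (N-1) hlast 1 _ (le_of_eq hcastA.symm)).2
      rw [Nat.cast_sub hN1]
      push_cast
      rw [div_le_one hNR]
      linarith
    have h2 : γw 1 = w := by
      rw [hγw]
      push_cast
      ring
    rwa [h2] at h1
  refine ⟨Lp (cblk (N-1) hlast), O ∩ Vp (cblk (N-1) hlast),
    hOopen.inter (hVo _), ⟨hwO, hwVlast⟩,
    (hLc _).mono inter_subset_right, ?_⟩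
  rintro w' ⟨hw'O, hw'V⟩ y' hy'c hy'0 hy'l
  obtain ⟨CE, CM⟩ := hOmem w' hw'O
  set γ' : ℝ → ℂ := fun s => z₀ + (s:ℂ) * (w' - z₀) with hγ'
  have hγ'c : Continuous γ' :=
    continuous_const.add (Complex.continuous_ofReal.mul continuous_const)
  -- induction over the blocks
  have hind : ∀ k : ℕ, ∀ (hk : k < N), ∃ y : ℝ → ℂ, Continuous y ∧ y 0 = x₀ ∧
      (∀ s ∈ Icc (0:ℝ) (((k:ℝ)+1)/N), y s ∈ Ω ∧ S (y s) = γ' s) ∧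
      y (((k:ℝ)+1)/N) = Lp (cblk k hk) (γ' (((k:ℝ)+1)/N)) := by
    intro k
    induction k with
    | zero =>
      intro hk
      rw [show (((0:ℕ):ℝ)+1)/(N:ℝ) = 1/N by norm_num]
      set c0 := cblk 0 hk with hc0
      have hE0 : ∀ s : ℝ, 0 ≤ s → s ≤ 1/N → γ' s ∈ Vp c0 := by
        intro s h1 h2
        have := CE 0 (Finset.mem_range.mpr hk) hk s (by simpa using h1) (by simpa using h2)
        simpa using this
      have h1N : (0:ℝ) ≤ 1/N := by positivity
      set y : ℝ → ℂ := fun s => Lp c0 (γ' (max 0 (min s (1/N)))) with hy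
      have hclamp : ∀ s : ℝ, 0 ≤ max 0 (min s (1/N)) ∧ max 0 (min s (1/N)) ≤ 1/N :=
        fun s => ⟨le_max_left _ _, max_le h1N (min_le_right _ _)⟩
      have hyc : Continuous y := by
        apply (hLc c0).comp_continuous
          (hγ'c.comp (continuous_const.max (continuous_id.min continuous_const)))
        intro s
        exact hE0 _ (hclamp s).1 (hclamp s).2
      have hyw0U : yw 0 ∈ Up c0 := by
        apply (hblk 0 hk 0 (by simp) (by simpa using h1N)).1
      have hy0 : y 0 = x₀ := by
        have h1 : γ' (max 0 (min (0:ℝ) (1/N))) = z₀ := by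
          rw [min_eq_left h1N, max_self, hγ']
          simp
        show Lp c0 (γ' (max 0 (min (0:ℝ) (1/N)))) = x₀
        rw [h1]
        have h3 := (hUp c0 (yw 0) hyw0U).2
        rw [hyw0] at h3
        exact h3
      refine ⟨y, hyc, hy0, ?_, ?_⟩
      · intro s hs
        have h2 : max 0 (min s (1/N)) = s := by
          rw [min_eq_left hs.2, max_eq_right hs.1]
        show Lp c0 (γ' (max 0 (min s (1/N)))) ∈ Ω ∧
          S (Lp c0 (γ' (max 0 (min s (1/N))))) = γ' s
        rw [h2]
        have h3 : γ' s ∈ Vp c0 := hE0 s hs.1 hs.2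
        exact ⟨hUsub c0 (hVp c0 _ h3).1, (hVp c0 _ h3).2⟩
      · show Lp c0 (γ' (max 0 (min (1/(N:ℝ)) (1/N)))) = Lp c0 (γ' (1/N))
        rw [min_self, max_eq_right h1N]
    | succ k ih =>
      intro hk1
      have hkN : k < N := by omega
      obtain ⟨y, hyc, hy0, hyp, hyend⟩ := ih hkN
      have hcasts : ((k+1:ℕ):ℝ) = (k:ℝ)+1 := by push_cast; ring
      set a : ℝ := ((k:ℝ)+1)/N with ha
      set b : ℝ := (((k:ℝ)+1)+1)/N with hb
      have hab : a < b := by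
        have h1 : b - a = 1/N := by rw [ha, hb]; ring
        have h2 : (0:ℝ) < 1/N := by positivity
        linarith
      have ha0 : 0 ≤ a := by positivity
      set clast := cblk (k+1) hk1 with hclast
      have hEk1 : ∀ s : ℝ, a ≤ s → s ≤ b → γ' s ∈ Vp clast := by
        intro s h1 h2
        have := CE (k+1) (Finset.mem_range.mpr hk1) hk1 s
          (by rw [hcasts]; exact h1) (by rw [hcasts]; exact h2)
        exact this
      have hclamp : ∀ s : ℝ, a ≤ max a (min s b) ∧ max a (min s b) ≤ b :=
        fun s => ⟨le_max_left _ _, max_le hab.le (min_le_right _ _)⟩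
      set y2 : ℝ → ℂ := fun s => if s ≤ a then y (min s a) else Lp clast (γ' (max a (min s b)))
        with hy2
      have hf2 : Continuous fun s : ℝ => y (min s a) :=
        hyc.comp (continuous_id.min continuous_const)
      have hg2 : Continuous fun s : ℝ => Lp clast (γ' (max a (min s b))) := by
        apply (hLc clast).comp_continuous
          (hγ'c.comp (continuous_const.max (continuous_id.min continuous_const)))
        intro s
        exact hEk1 _ (hclamp s).1 (hclamp s).2
      have hmatch : y a = Lp clast (γ' a) := by
        rw [hyend]
        have hL1 : Lp (cblk k hkN) (γ' a) ∈ Up clast := by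
          have := CM k (Finset.mem_range.mpr hkN) hk1
          exact this
        have hL2 : Lp clast (γ' a) ∈ Up clast := by
          have h3 : γ' a ∈ Vp clast := hEk1 a (le_refl a) hab.le
          exact (hVp clast _ h3).1
        apply hinj clast hL1 hL2
        have h4 : γ' a ∈ Vp (cblk k hkN) := by
          have h5 : (k:ℝ)/N ≤ a := by
            rw [ha]
            have h6 : ((k:ℝ)+1)/N - (k:ℝ)/N = 1/N := by ring
            have h7 : (0:ℝ) < 1/N := by positivity
            linarith
          exact CE k (Finset.mem_range.mpr hkN) hkN a h5 (le_refl a)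
        have h6 : γ' a ∈ Vp clast := hEk1 a (le_refl a) hab.le
        rw [(hVp (cblk k hkN) _ h4).2, (hVp clast _ h6).2]
      have hbdry : ∀ s : ℝ, s = a → y (min s a) = Lp clast (γ' (max a (min s b))) := by
        intro s hs
        subst hs
        rw [min_self, min_eq_left hab.le, max_self]
        exact hmatch
      have hy2c : Continuous y2 := by
        rw [hy2]
        exact Continuous.if_le hf2 hg2 continuous_id continuous_const hbdry
      have hy20 : y2 0 = x₀ := by
        rw [hy2]
        simp only [if_pos ha0, min_eq_left ha0]
        exact hy0
      refine ⟨y2, hy2c, hy20, ?_, ?_⟩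
      · intro s hs
        rw [hy2]
        by_cases hsa : s ≤ a
        · simp only [if_pos hsa, min_eq_left hsa]
          exact hyp s ⟨hs.1, hsa⟩
        · push_neg at hsa
          simp only [if_neg (not_le.mpr hsa)]
          have hsb : s ≤ b := by
            have : (((k+1:ℕ):ℝ)+1)/N = b := by rw [hcasts]
            rw [← this]
            exact hs.2
          rw [min_eq_left hsb, max_eq_right hsa.le]
          have h3 : γ' s ∈ Vp clast := hEk1 s hsa.le hsb
          exact ⟨hUsub clast (hVp clast _ h3).1, (hVp clast _ h3).2⟩
      · have hbb : (((k+1:ℕ):ℝ)+1)/N = b := by rw [hcasts]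
        rw [hbb]
        show (if b ≤ a then y (min b a) else Lp clast (γ' (max a (min b b)))) =
          Lp clast (γ' b)
        rw [if_neg (not_le.mpr hab), min_self, max_eq_right hab.le]
  -- conclude via uniqueness of lifts
  obtain ⟨y, hyc, hy0, hyp, hyend⟩ := hind (N-1) hlast
  rw [hcastA] at hyp hyend
  have huniq := stokes_lift_unique hΩ hsqne hSd (a := 0) (b := 1) zero_le_one
    hy'c.continuousOn hyc.continuousOn
    (fun t ht => (hy'l t ht))
    (fun t ht => hyp t ht)
    (hy'0.trans hy0.symm)
  have h1 := huniq (show (1:ℝ) ∈ Icc (0:ℝ) 1 from ⟨zero_le_one, le_refl 1⟩)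
  rw [h1, hyend]
  congr 1
  rw [hγ']
  push_cast
  ring

/-- For a Stokes domain `Ω` of type (1) (`Im 𝔖_a > 0` on `Ω`,
`Im 𝔖_a = 0` on `∂Ω`), the map `z = 𝔖_a(x)` is a conformal (holomorphic)
bijection of `Ω` onto the upper half-plane `ℂ₊`, whose inverse `Ψ` solves
`Ψ'(z) = 1/√Q(Ψ(z))` globally on `ℂ₊`. -/
theorem stmt18 (Q : Polynomial ℂ) (a : ℂ) (ha : Q.eval a = 0)
    (sq S : ℂ → ℂ) (Ω : Set ℂ)
    (hΩ : IsOpen Ω) (hΩc : IsConnected Ω) (haΩ : a ∈ frontier Ω)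
    (hQ : ∀ x ∈ Ω, Q.eval x ≠ 0)
    (hsqne : ∀ x ∈ Ω, sq x ≠ 0)
    (hsq : ∀ x ∈ Ω, sq x ^ 2 = Q.eval x)
    (hsqd : DifferentiableOn ℂ sq Ω)
    (hScont : ContinuousOn S (closure Ω))
    (hSd : ∀ x ∈ Ω, HasDerivAt S (sq x) x)
    (hSa : S a = 0)
    (hpos : ∀ x ∈ Ω, 0 < (S x).im)
    (hbd : ∀ x ∈ frontier Ω, (S x).im = 0) :
    Set.BijOn S Ω {z : ℂ | 0 < z.im} ∧ DifferentiableOn ℂ S Ω ∧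
    ∃ Ψ : ℂ → ℂ, (∀ z : ℂ, 0 < z.im → Ψ z ∈ Ω ∧ S (Ψ z) = z ∧
        HasDerivAt Ψ (1 / sq (Ψ z)) z) ∧
      ∀ x ∈ Ω, Ψ (S x) = x := by
  obtain ⟨x₀, hx₀⟩ := hΩc.nonempty
  have hdiffS : DifferentiableOn ℂ S Ω := fun x hx =>
    (hSd x hx).differentiableAt.differentiableWithinAt
  -- the square root is large far away
  have hdeg : 0 < Q.degree := by
    by_contra h
    push_neg at h
    have hC := Polynomial.eq_C_of_degree_le_zero h
    rw [hC] at ha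
    simp only [Polynomial.eval_C] at ha
    have := hQ x₀ hx₀
    rw [hC] at this
    simp [ha] at this
  obtain ⟨R, hR⟩ := poly_big hdeg
  have hbig : ∃ R : ℝ, ∀ x ∈ Ω, R ≤ ‖x‖ → 1 ≤ ‖sq x‖ := by
    refine ⟨R, fun x hx hxR => ?_⟩
    have h1 : 1 ≤ ‖Q.eval x‖ := hR x hxR
    rw [← hsq x hx, norm_pow] at h1
    nlinarith [norm_nonneg (sq x)]
  -- lifts of all segments exist
  have hlift : ∀ w : ℂ, 0 < w.im → ∃ y : ℝ → ℂ, Continuous y ∧ y 0 = x₀ ∧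
      ∀ t ∈ Icc (0:ℝ) 1, y t ∈ Ω ∧ S (y t) = S x₀ + (t:ℂ) * (w - S x₀) :=
    fun w hw => stokes_lift_exists hΩ hsqne hSd hScont hpos hbd hbig hx₀ hw
  -- the inverse map
  set Φ : ℂ → ℂ := fun w =>
    if h : 0 < w.im then (Classical.choose (hlift w h)) 1 else x₀ with hΦdef
  have hΦval : ∀ w (h : 0 < w.im), Φ w = (Classical.choose (hlift w h)) 1 := by
    intro w h
    rw [hΦdef]
    exact dif_pos h
  have hΦspec : ∀ w (h : 0 < w.im), Φ w ∈ Ω ∧ S (Φ w) = w := by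
    intro w h
    obtain ⟨hc, h0, hl⟩ := Classical.choose_spec (hlift w h)
    have h2 := hl 1 ⟨zero_le_one, le_refl 1⟩
    rw [hΦval w h]
    refine ⟨h2.1, ?_⟩
    rw [h2.2]
    push_cast
    ring
  -- local expression of Φ through the stability lemma
  have hΦloc : ∀ w (h : 0 < w.im), ∃ V : Set ℂ, IsOpen V ∧ w ∈ V ∧
      ∃ Lf : ℂ → ℂ, ContinuousOn Lf V ∧ ∀ w' ∈ V, 0 < w'.im → Φ w' = Lf w' := by
    intro w h
    obtain ⟨hc, h0, hl⟩ := Classical.choose_spec (hlift w h)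
    obtain ⟨Lf, V, hVo, hwV, hLfc, hmain⟩ :=
      stokes_endpoint_stable hΩ hsqne hSd hx₀ hc h0 hl
    refine ⟨V, hVo, hwV, Lf, hLfc, fun w' hw'V hw'im => ?_⟩
    obtain ⟨hc', h0', hl'⟩ := Classical.choose_spec (hlift w' hw'im)
    rw [hΦval w' hw'im]
    exact hmain w' hw'V _ hc' h0' hl'
  have hΦcont : ∀ w, 0 < w.im → ContinuousAt Φ w := by
    intro w h
    obtain ⟨V, hVo, hwV, Lf, hLfc, heq⟩ := hΦloc w h
    have hopen : IsOpen (V ∩ {z : ℂ | 0 < z.im}) :=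
      hVo.inter (isOpen_lt continuous_const Complex.continuous_im)
    have hev : Φ =ᶠ[𝓝 w] Lf :=
      Filter.eventuallyEq_of_mem (hopen.mem_nhds ⟨hwV, h⟩)
        (fun w' hw' => heq w' hw'.1 hw'.2)
    exact (hLfc.continuousAt (hVo.mem_nhds hwV)).congr hev.symm
  -- derivative of Φ
  have hΦderiv : ∀ z, 0 < z.im → HasDerivAt Φ (1 / sq (Φ z)) z := by
    intro z hz
    obtain ⟨hpΩ, hSpz⟩ := hΦspec z hz
    obtain ⟨U, V, L, hUo, hVo, hpU, hSpV, hUsub, hinj, hLc, hVp, hUp, hLd⟩ :=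
      stokes_pkg hΩ hsqne hSd hpΩ
    have hzV : z ∈ V := by rwa [hSpz] at hSpV
    have hev : ∀ᶠ w' in 𝓝 z, Φ w' = L w' := by
      have e1 : ∀ᶠ w' in 𝓝 z, Φ w' ∈ U :=
        (hΦcont z hz).eventually_mem (hUo.mem_nhds hpU)
      have e2 : ∀ᶠ w' in 𝓝 z, w' ∈ V := hVo.mem_nhds hzV
      have e3 : ∀ᶠ w' in 𝓝 z, 0 < w'.im :=
        (isOpen_lt continuous_const Complex.continuous_im).mem_nhds hz
      filter_upwards [e1, e2, e3] with w' h1 h2 h3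
      have h4 : S (Φ w') = w' := (hΦspec w' h3).2
      have h5 : L w' ∈ U := (hVp w' h2).1
      have h6 : S (L w') = w' := (hVp w' h2).2
      exact hinj h1 h5 (h4.trans h6.symm)
    have hLz : HasDerivAt L (sq (Φ z))⁻¹ z := by
      have := hLd.hasDerivAt
      rwa [hSpz] at this
    have : HasDerivAt Φ (sq (Φ z))⁻¹ z := by
      apply HasDerivAt.congr_of_eventuallyEq hLz hev
    rwa [one_div]
  -- Φ is a global section : Φ (S x) = x on Ω
  have hΦx₀ : Φ (S x₀) = x₀ := by
    have him := hpos x₀ hx₀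
    obtain ⟨hc, h0, hl⟩ := Classical.choose_spec (hlift (S x₀) him)
    rw [hΦval _ him]
    have huniq := stokes_lift_unique hΩ hsqne hSd (a := 0) (b := 1) zero_le_one
      hc.continuousOn continuous_const.continuousOn hl
      (fun t _ => ⟨hx₀, by simp⟩) (by rw [h0])
    exact (huniq ⟨zero_le_one, le_refl 1⟩).symm ▸ rfl
  have hsection : ∀ x ∈ Ω, Φ (S x) = x := by
    set u : Set ℂ := {x | x ∈ Ω ∧ Φ (S x) = x} with hu
    set v : Set ℂ := {x | x ∈ Ω ∧ Φ (S x) ≠ x} with hv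
    have hucont : ∀ x ∈ Ω, ContinuousAt (fun x' => Φ (S x')) x := fun x hx =>
      (hΦcont _ (hpos x hx)).comp (hSd x hx).continuousAt
    have huo : IsOpen u := by
      rw [isOpen_iff_mem_nhds]
      rintro x ⟨hxΩ, hxfix⟩
      obtain ⟨U, V, L, hUo, hVo, hpU, hSpV, hUsub, hinj, hLc, hVp, hUp, hLd⟩ :=
        stokes_pkg hΩ hsqne hSd hxΩ
      have e1 : ∀ᶠ x' in 𝓝 x, x' ∈ U := hUo.mem_nhds hpU
      have e2 : ∀ᶠ x' in 𝓝 x, Φ (S x') ∈ U := by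
        apply (hucont x hxΩ).eventually_mem
        rw [hxfix]
        exact hUo.mem_nhds hpU
      filter_upwards [e1, e2] with x' h1 h2
      have hx'Ω : x' ∈ Ω := hUsub h1
      have h3 : S (Φ (S x')) = S x' := (hΦspec _ (hpos x' hx'Ω)).2
      exact ⟨hx'Ω, hinj h2 h1 h3⟩
    have hvo : IsOpen v := by
      rw [isOpen_iff_mem_nhds]
      rintro x ⟨hxΩ, hxne⟩
      have e0 : ∀ᶠ x' in 𝓝 x, x' ∈ Ω := hΩ.mem_nhds hxΩ
      have e1 : ∀ᶠ x' in 𝓝 x, Φ (S x') - x' ≠ 0 := by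
        apply ContinuousAt.eventually_ne
        · exact (hucont x hxΩ).sub continuousAt_id
        · exact sub_ne_zero.mpr hxne
      filter_upwards [e0, e1] with x' h0 h1
      exact ⟨h0, sub_ne_zero.mp h1⟩
    have hdisj : Disjoint u v := by
      rw [Set.disjoint_left]
      rintro x ⟨_, h1⟩ ⟨_, h2⟩
      exact h2 h1
    have hsub : Ω ⊆ u ∪ v := by
      intro x hx
      by_cases hfix : Φ (S x) = x
      · exact Or.inl ⟨hx, hfix⟩
      · exact Or.inr ⟨hx, hfix⟩
    have hune : (Ω ∩ u).Nonempty := ⟨x₀, hx₀, hx₀, hΦx₀⟩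
    have := IsPreconnected.subset_left_of_subset_union huo hvo hdisj hsub hune
      hΩc.isPreconnected
    exact fun x hx => (this hx).2
  refine ⟨⟨fun x hx => hpos x hx, ?_, ?_⟩, hdiffS, Φ, ?_, hsection⟩
  · -- injectivity
    intro x hx y hy hxy
    have h1 : Φ (S x) = x := hsection x hx
    have h2 : Φ (S y) = y := hsection y hy
    rw [← h1, ← h2, hxy]
  · -- surjectivity
    intro z hz
    exact ⟨Φ z, (hΦspec z hz).1, (hΦspec z hz).2⟩
  · intro z hz
    exact ⟨(hΦspec z hz).1, (hΦspec z hz).2, hΦderiv z hz⟩
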